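/- Let B be a commutative Hopf algebra and t ∈ B a trace-like element. Then the bilinear form •_t : B × B → K defined by b •_t c = b̄(c) (where b̄ ∈ g is the unique derivation mapped to the class of b under the isomorphism μ ↦ μ(t')p(t'') from g to I/I²) is a balanced biderivation, and moreover b •_t c = (b •_t t')(c •_t t'') for all b, c ∈ B. -/

import Mathlib

open scoped TensorProduct

section TraceLike

variable (K B : Type*) [CommRing K] [CommRing B] [HopfAlgebra K B]

/-- The submodule `K·1_B + I²` of `B`, where `I = Ker ε`; the quotient
`B ⧸ (K·1_B + I²)` is canonically identified with `I/I²` via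
`b ↦ b - ε(b)1 mod I²`. -/
noncomputable def augSquare : Submodule K B :=
  Submodule.span K {(1 : B)} ⊔
    Submodule.restrictScalars K
      ((RingHom.ker (Bialgebra.counitAlgHom K B).toRingHom) ^ 2)

/-- A linear functional `μ : B → K` is a derivation:
`μ(bc) = ε(b)μ(c) + ε(c)μ(b)`. -/
def IsCounitDer (μ : B →ₗ[K] K) : Prop :=
  ∀ b c : B,
    μ (b * c) =
      Coalgebra.counit (R := K) b * μ c + Coalgebra.counit (R := K) c * μ b

/-- The map `g → I/I²`, `μ ↦ μ(t')·p(t'')` determined by `t ∈ B` (with `I/I²`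
realized as `B ⧸ (K·1 + I²)`). -/
noncomputable def psiMap (t : B) (μ : B →ₗ[K] K) : B ⧸ augSquare K B :=
  TensorProduct.lift
    (LinearMap.mk₂ K (fun a b => μ a • (augSquare K B).mkQ b)
      (fun m₁ m₂ n => by simp [add_smul])
      (fun c m n => by simp [mul_smul])
      (fun m n₁ n₂ => by simp)
      (fun c m n => by simp [smul_comm c (μ m)]))
    (Coalgebra.comul t)

/-- The iterated comultiplication `b ↦ b' ⊗ b'' ⊗ b'''`. -/
noncomputable def comulIter3 (b : B) : (B ⊗[K] B) ⊗[K] B :=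
  LinearMap.rTensor B (Coalgebra.comul (R := K)) (Coalgebra.comul b)

end TraceLike

open TensorProduct Coalgebra HopfAlgebra

section Aux
variable {K B : Type*} [CommRing K] [CommRing B] [HopfAlgebra K B]

lemma sum_counit_right_smul {x : B} {ι : Type*} (r : Coalgebra.Repr K x ι) :
    ∑ i ∈ r.index, Coalgebra.counit (R := K) (r.right i) • r.left i = x := by
  have h := Coalgebra.sum_tmul_counit_eq r
  apply_fun (TensorProduct.rid K B) at h
  rw [map_sum] at h
  simp only [TensorProduct.rid_tmul] at h
  rw [h]; simp

lemma sum_counit_left_smul {x : B} {ι : Type*} (r : Coalgebra.Repr K x ι) :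
    ∑ i ∈ r.index, Coalgebra.counit (R := K) (r.left i) • r.right i = x := by
  have h := Coalgebra.sum_counit_tmul_eq r
  apply_fun (TensorProduct.lid K B) at h
  rw [map_sum] at h
  simp only [TensorProduct.lid_tmul] at h
  rw [h]; simp

noncomputable def mulRepr {x y : B} {ι κ : Type*} (rx : Coalgebra.Repr K x ι)
    (ry : Coalgebra.Repr K y κ) : Coalgebra.Repr K (x * y) (ι × κ) where
  index := rx.index ×ˢ ry.index
  left := fun p => rx.left p.1 * ry.left p.2
  right := fun p => rx.right p.1 * ry.right p.2
  eq := by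
    rw [Bialgebra.comul_mul, ← rx.eq, ← ry.eq, Finset.sum_mul_sum]
    rw [Finset.sum_product]
    simp [Algebra.TensorProduct.tmul_mul_tmul]

lemma transfer {M : Type*} [AddCommMonoid M] [Module K M]
    (L : B ⊗[K] (B ⊗[K] B) →ₗ[K] M) {a : B} {ι ι₁ ι₂ : Type*} (ra : Coalgebra.Repr K a ι)
    (l1 : ∀ i : ι, Coalgebra.Repr K (ra.left i) ι₁)
    (l2 : ∀ i : ι, Coalgebra.Repr K (ra.right i) ι₂) :
    ∑ i ∈ ra.index, ∑ k ∈ (l2 i).index,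
        L (ra.left i ⊗ₜ[K] ((l2 i).left k ⊗ₜ[K] (l2 i).right k)) =
      ∑ i ∈ ra.index, ∑ k ∈ (l1 i).index,
        L ((l1 i).left k ⊗ₜ[K] ((l1 i).right k ⊗ₜ[K] ra.right i)) := by
  have h := Coalgebra.sum_tmul_tmul_eq ra l1 l2
  apply_fun L at h
  simpa [map_sum] using h.symm

/-- The trilinear contraction `x ⊗ (y ⊗ z) ↦ f(x) * (g(y) * h(z))`. -/
noncomputable def tmul3 (f g h : B →ₗ[K] B) : B ⊗[K] (B ⊗[K] B) →ₗ[K] B :=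
  LinearMap.mul' K B ∘ₗ map f (LinearMap.mul' K B ∘ₗ map g h)

@[simp] lemma tmul3_tmul (f g h : B →ₗ[K] B) (x y z : B) :
    tmul3 f g h (x ⊗ₜ[K] (y ⊗ₜ[K] z)) = f x * (g y * h z) := by
  simp [tmul3]


lemma sum_reorder4 {M : Type*} [AddCommMonoid M] {ia ib : Type*} {ka : ia → Type*}
    {kb : ib → Type*} (sa : Finset ia) (sb : Finset ib) (ta : ∀ i, Finset (ka i))
    (tb : ∀ j, Finset (kb j)) (F : ∀ (i : ia), ka i → ∀ (j : ib), kb j → M) :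
    (∑ j ∈ sb, ∑ l ∈ tb j, ∑ i ∈ sa, ∑ k ∈ ta i, F i k j l) =
      ∑ i ∈ sa, ∑ k ∈ ta i, ∑ j ∈ sb, ∑ l ∈ tb j, F i k j l := by
  have h1 : ∀ j ∈ sb, (∑ l ∈ tb j, ∑ i ∈ sa, ∑ k ∈ ta i, F i k j l)
      = ∑ i ∈ sa, ∑ l ∈ tb j, ∑ k ∈ ta i, F i k j l := fun j _ => Finset.sum_comm
  rw [Finset.sum_congr rfl h1, Finset.sum_comm]
  refine Finset.sum_congr rfl fun i _ => ?_
  have h2 : ∀ j ∈ sb, (∑ l ∈ tb j, ∑ k ∈ ta i, F i k j l)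
      = ∑ k ∈ ta i, ∑ l ∈ tb j, F i k j l := fun j _ => Finset.sum_comm
  rw [Finset.sum_congr rfl h2, Finset.sum_comm]

local notation "S" => HopfAlgebra.antipode (R := K) (A := B)
local notation "ε" => Coalgebra.counit (R := K) (A := B)

lemma antipode_mul' (a b : B) : S (a * b) = S a * S b := by
  classical
  set ra := Coalgebra.Repr.arbitrary K a with hra
  set rb := Coalgebra.Repr.arbitrary K b with hrb
  let ra1 : ∀ i : B × B, Coalgebra.Repr K (ra.left i) (B × B) := fun i => Coalgebra.Repr.arbitrary K _
  let ra2 : ∀ i : B × B, Coalgebra.Repr K (ra.right i) (B × B) := fun i => Coalgebra.Repr.arbitrary K _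
  let rb1 : ∀ j : B × B, Coalgebra.Repr K (rb.left j) (B × B) := fun j => Coalgebra.Repr.arbitrary K _
  let rb2 : ∀ j : B × B, Coalgebra.Repr K (rb.right j) (B × B) := fun j => Coalgebra.Repr.arbitrary K _
  -- Step 1
  have step1 : S (a * b) =
      ∑ i ∈ ra.index, ∑ j ∈ rb.index,
        (ε (ra.right i) * ε (rb.right j)) • S (ra.left i * rb.left j) := by
    have hab : a * b = ∑ i ∈ ra.index, ∑ j ∈ rb.index,
        (ε (ra.right i) * ε (rb.right j)) • (ra.left i * rb.left j) := by
      conv_lhs => rw [← sum_counit_right_smul ra, ← sum_counit_right_smul rb]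
      rw [Finset.sum_mul_sum]
      exact Finset.sum_congr rfl fun i _ => Finset.sum_congr rfl fun j _ =>
        smul_mul_smul_comm _ _ _ _
    rw [hab]; simp [map_sum, map_smul]
  -- Step 2 : insert the two antipode sums
  have step2 : S (a * b) =
      ∑ i ∈ ra.index, ∑ j ∈ rb.index, ∑ k ∈ (ra2 i).index, ∑ l ∈ (rb2 j).index,
        S (ra.left i * rb.left j) *
          ((ra2 i).left k * (S ((ra2 i).right k) *
            ((rb2 j).left l * S ((rb2 j).right l)))) := by
    rw [step1]
    refine Finset.sum_congr rfl fun i _ => Finset.sum_congr rfl fun j _ => ?_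
    calc (ε (ra.right i) * ε (rb.right j)) • S (ra.left i * rb.left j)
        = S (ra.left i * rb.left j) *
            ((ε (ra.right i) • (1:B)) * (ε (rb.right j) • (1:B))) := by
          rw [smul_mul_smul_comm, mul_one, mul_smul_comm, mul_one]
      _ = S (ra.left i * rb.left j) *
            ((∑ k ∈ (ra2 i).index, (ra2 i).left k * S ((ra2 i).right k)) *
             (∑ l ∈ (rb2 j).index, (rb2 j).left l * S ((rb2 j).right l))) := by
          rw [sum_mul_antipode_eq_smul (ra2 i), sum_mul_antipode_eq_smul (rb2 j)]
      _ = ∑ k ∈ (ra2 i).index, ∑ l ∈ (rb2 j).index,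
            S (ra.left i * rb.left j) *
              ((ra2 i).left k * (S ((ra2 i).right k) *
                ((rb2 j).left l * S ((rb2 j).right l)))) := by
          rw [Finset.sum_mul_sum, Finset.mul_sum]
          refine Finset.sum_congr rfl fun k _ => ?_
          rw [Finset.mul_sum]
          exact Finset.sum_congr rfl fun l _ => by ring
  -- Step 3 : coassociativity transfer in `a`
  have step3 : S (a * b) =
      ∑ j ∈ rb.index, ∑ l ∈ (rb2 j).index, ∑ i ∈ ra.index, ∑ k ∈ (ra1 i).index,
        S ((ra1 i).left k * rb.left j) *
          ((ra1 i).right k * (S (ra.right i) *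
            ((rb2 j).left l * S ((rb2 j).right l)))) := by
    rw [step2]
    have reorder : ∀ (f : B × B → B × B → B),
        (∀ i j, f i j ∈ Set.univ) →
        True := fun _ _ => trivial
    rw [Finset.sum_comm]
    refine Finset.sum_congr rfl fun j _ => ?_
    have swap1 : ∀ i ∈ ra.index,
        (∑ k ∈ (ra2 i).index, ∑ l ∈ (rb2 j).index,
          S (ra.left i * rb.left j) *
            ((ra2 i).left k * (S ((ra2 i).right k) *
              ((rb2 j).left l * S ((rb2 j).right l))))) =
        ∑ l ∈ (rb2 j).index, ∑ k ∈ (ra2 i).index,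
          S (ra.left i * rb.left j) *
            ((ra2 i).left k * (S ((ra2 i).right k) *
              ((rb2 j).left l * S ((rb2 j).right l)))) := fun i _ => Finset.sum_comm
    rw [Finset.sum_congr rfl swap1, Finset.sum_comm]
    refine Finset.sum_congr rfl fun l _ => ?_
    have ha := transfer (M := B)
      (tmul3 (S ∘ₗ LinearMap.mulRight K (rb.left j)) LinearMap.id
        ((LinearMap.mulRight K ((rb2 j).left l * S ((rb2 j).right l))) ∘ₗ S))
      ra ra1 ra2
    simp only [tmul3_tmul, LinearMap.comp_apply, LinearMap.id_apply,
      LinearMap.mulRight_apply] at ha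
    exact ha
  -- Step 4 : coassociativity transfer in `b`
  have step4 : S (a * b) =
      ∑ i ∈ ra.index, ∑ k ∈ (ra1 i).index, ∑ j ∈ rb.index, ∑ l ∈ (rb1 j).index,
        S ((ra1 i).left k * (rb1 j).left l) *
          (((ra1 i).right k * S (ra.right i) * (rb1 j).right l) * S (rb.right j)) := by
    rw [step3, sum_reorder4]
    refine Finset.sum_congr rfl fun i _ => Finset.sum_congr rfl fun k _ => ?_
    have hb := transfer (M := B)
      (tmul3 (S ∘ₗ LinearMap.mulLeft K ((ra1 i).left k))
        (LinearMap.mulLeft K ((ra1 i).right k * S (ra.right i))) S)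
      rb rb1 rb2
    simp only [tmul3_tmul, LinearMap.comp_apply, LinearMap.mulLeft_apply] at hb
    calc ∑ j ∈ rb.index, ∑ l ∈ (rb2 j).index,
          S ((ra1 i).left k * rb.left j) *
            ((ra1 i).right k * (S (ra.right i) *
              ((rb2 j).left l * S ((rb2 j).right l))))
        = ∑ j ∈ rb.index, ∑ l ∈ (rb2 j).index,
            S ((ra1 i).left k * rb.left j) *
              ((ra1 i).right k * S (ra.right i) * (rb2 j).left l *
                S ((rb2 j).right l)) := by
          exact Finset.sum_congr rfl fun j _ => Finset.sum_congr rfl fun l _ => by ring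
      _ = ∑ j ∈ rb.index, ∑ l ∈ (rb1 j).index,
            S ((ra1 i).left k * (rb1 j).left l) *
              ((ra1 i).right k * S (ra.right i) * (rb1 j).right l *
                S (rb.right j)) := by
          exact hb
      _ = ∑ j ∈ rb.index, ∑ l ∈ (rb1 j).index,
            S ((ra1 i).left k * (rb1 j).left l) *
              (((ra1 i).right k * S (ra.right i) * (rb1 j).right l) *
                S (rb.right j)) := by
          exact Finset.sum_congr rfl fun j _ => Finset.sum_congr rfl fun l _ => by ring
  -- Step 5 : contract the inner double sum with the antipode axiom
  have step5 : S (a * b) =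
      ∑ i ∈ ra.index, ∑ j ∈ rb.index,
        (ε (ra.left i) * ε (rb.left j)) • (S (ra.right i) * S (rb.right j)) := by
    rw [step4]
    refine Finset.sum_congr rfl fun i _ => ?_
    rw [Finset.sum_comm]
    refine Finset.sum_congr rfl fun j _ => ?_
    calc ∑ k ∈ (ra1 i).index, ∑ l ∈ (rb1 j).index,
          S ((ra1 i).left k * (rb1 j).left l) *
            (((ra1 i).right k * S (ra.right i) * (rb1 j).right l) * S (rb.right j))
        = (∑ k ∈ (ra1 i).index, ∑ l ∈ (rb1 j).index,
            S ((ra1 i).left k * (rb1 j).left l) *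
              ((ra1 i).right k * (rb1 j).right l)) *
            (S (ra.right i) * S (rb.right j)) := by
          rw [Finset.sum_mul]
          refine Finset.sum_congr rfl fun k _ => ?_
          rw [Finset.sum_mul]
          exact Finset.sum_congr rfl fun l _ => by ring
      _ = ((ε (ra.left i * rb.left j)) • (1:B)) * (S (ra.right i) * S (rb.right j)) := by
          congr 1
          have h := sum_antipode_mul_eq_smul (mulRepr (ra1 i) (rb1 j))
          rw [← Finset.sum_product']
          exact h
      _ = (ε (ra.left i) * ε (rb.left j)) • (S (ra.right i) * S (rb.right j)) := by
          rw [Bialgebra.counit_mul, smul_mul_assoc, one_mul]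
  -- Step 6 : recognise `S a * S b`
  rw [step5]
  have hsa : S a = ∑ i ∈ ra.index, ε (ra.left i) • S (ra.right i) := by
    conv_lhs => rw [← sum_counit_left_smul ra]
    simp [map_sum, map_smul]
  have hsb : S b = ∑ j ∈ rb.index, ε (rb.left j) • S (rb.right j) := by
    conv_lhs => rw [← sum_counit_left_smul rb]
    simp [map_sum, map_smul]
  rw [hsa, hsb, Finset.sum_mul_sum]
  exact Finset.sum_congr rfl fun i _ => Finset.sum_congr rfl fun j _ =>
    (smul_mul_smul_comm _ _ _ _).symm

/-- `x ⊗ y ↦ ν(y) • S(x)` -/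
noncomputable def fS (ν : B →ₗ[K] K) : B ⊗[K] B →ₗ[K] B :=
  (TensorProduct.rid K B).toLinearMap ∘ₗ map (HopfAlgebra.antipode (R := K)) ν

@[simp] lemma fS_tmul (ν : B →ₗ[K] K) (x y : B) :
    fS ν (x ⊗ₜ[K] y) = ν y • HopfAlgebra.antipode (R := K) x := by
  simp [fS]

/-- `x ⊗ y ↦ ν(y) • x` -/
noncomputable def fId (ν : B →ₗ[K] K) : B ⊗[K] B →ₗ[K] B :=
  (TensorProduct.rid K B).toLinearMap ∘ₗ map LinearMap.id ν

@[simp] lemma fId_tmul (ν : B →ₗ[K] K) (x y : B) :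
    fId ν (x ⊗ₜ[K] y) = ν y • x := by
  simp [fId]

/-- `Φ ν : x ↦ ∑ ν(x₂) • (S(x₁) * x₃)` -/
noncomputable def Phi (ν : B →ₗ[K] K) : B →ₗ[K] B :=
  LinearMap.mul' K B ∘ₗ LinearMap.rTensor B (fS ν) ∘ₗ
    LinearMap.rTensor B (Coalgebra.comul) ∘ₗ (Coalgebra.comul (R := K))

/-- `Ψ ν : x ↦ ∑ ν(x₂) • (x₁ * S(x₃))` -/
noncomputable def Psi (ν : B →ₗ[K] K) : B →ₗ[K] B :=
  LinearMap.mul' K B ∘ₗ map (fId ν) (HopfAlgebra.antipode (R := K)) ∘ₗ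
    LinearMap.rTensor B (Coalgebra.comul) ∘ₗ (Coalgebra.comul (R := K))

lemma Phi_repr (ν : B →ₗ[K] K) {x : B} {ι κ : Type*} (rx : Coalgebra.Repr K x ι)
    (rx1 : ∀ k : ι, Coalgebra.Repr K (rx.left k) κ) :
    Phi ν x = ∑ k ∈ rx.index, ∑ l ∈ (rx1 k).index,
      ν ((rx1 k).right l) • (S ((rx1 k).left l) * rx.right k) := by
  have : (Coalgebra.comul (R := K)).rTensor B (Coalgebra.comul x) =
      ∑ k ∈ rx.index, ∑ l ∈ (rx1 k).index,
        ((rx1 k).left l ⊗ₜ[K] (rx1 k).right l) ⊗ₜ[K] rx.right k := by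
    rw [← rx.eq, map_sum]
    refine Finset.sum_congr rfl fun k _ => ?_
    rw [LinearMap.rTensor_tmul, ← (rx1 k).eq, TensorProduct.sum_tmul]
  rw [Phi]
  simp only [LinearMap.comp_apply, this, map_sum]
  refine Finset.sum_congr rfl fun k _ => Finset.sum_congr rfl fun l _ => ?_
  simp [smul_mul_assoc]

lemma Psi_repr (ν : B →ₗ[K] K) {x : B} {ι κ : Type*} (rx : Coalgebra.Repr K x ι)
    (rx1 : ∀ k : ι, Coalgebra.Repr K (rx.left k) κ) :
    Psi ν x = ∑ k ∈ rx.index, ∑ l ∈ (rx1 k).index,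
      ν ((rx1 k).right l) • ((rx1 k).left l * S (rx.right k)) := by
  have : (Coalgebra.comul (R := K)).rTensor B (Coalgebra.comul x) =
      ∑ k ∈ rx.index, ∑ l ∈ (rx1 k).index,
        ((rx1 k).left l ⊗ₜ[K] (rx1 k).right l) ⊗ₜ[K] rx.right k := by
    rw [← rx.eq, map_sum]
    refine Finset.sum_congr rfl fun k _ => ?_
    rw [LinearMap.rTensor_tmul, ← (rx1 k).eq, TensorProduct.sum_tmul]
  rw [Psi]
  simp only [LinearMap.comp_apply, this, map_sum]
  refine Finset.sum_congr rfl fun k _ => Finset.sum_congr rfl fun l _ => ?_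
  simp [smul_mul_assoc]

lemma Phi_counit (x : B) : Phi (K := K) (Coalgebra.counit) x = ε x • (1 : B) := by
  have h1 : fS (Coalgebra.counit) ∘ₗ (Coalgebra.comul (R := K) (A := B)) = S := by
    apply LinearMap.ext; intro u
    have r := Coalgebra.Repr.arbitrary K u
    rw [LinearMap.comp_apply, ← r.eq, map_sum]
    simp only [fS_tmul]
    rw [show ∑ i ∈ r.index, Coalgebra.counit (R := K) (r.right i) •
        HopfAlgebra.antipode (R := K) (r.left i)
      = HopfAlgebra.antipode (R := K) (∑ i ∈ r.index,
          Coalgebra.counit (R := K) (r.right i) • r.left i) by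
        rw [map_sum]; exact Finset.sum_congr rfl fun i _ => (map_smul _ _ _).symm]
    rw [sum_counit_right_smul r]
  rw [Phi]
  simp only [LinearMap.comp_apply]
  rw [← LinearMap.comp_apply ((fS _).rTensor B), ← LinearMap.rTensor_comp, h1]
  rw [HopfAlgebra.mul_antipode_rTensor_comul_apply, Algebra.algebraMap_eq_smul_one]

lemma Psi_counit (x : B) : Psi (K := K) (Coalgebra.counit) x = ε x • (1 : B) := by
  have h1 : fId (Coalgebra.counit) ∘ₗ (Coalgebra.comul (R := K) (A := B)) =
      LinearMap.id := by
    apply LinearMap.ext; intro u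
    have r := Coalgebra.Repr.arbitrary K u
    rw [LinearMap.comp_apply, ← r.eq, map_sum]
    simp only [fId_tmul, LinearMap.id_apply]
    exact sum_counit_right_smul r
  have h2 : map (fId (Coalgebra.counit)) (HopfAlgebra.antipode (R := K) (A := B)) ∘ₗ
      LinearMap.rTensor B (Coalgebra.comul) =
      LinearMap.lTensor B (HopfAlgebra.antipode (R := K)) ∘ₗ
        LinearMap.rTensor B (fId (Coalgebra.counit) ∘ₗ Coalgebra.comul) := by
    apply TensorProduct.ext'
    intro u v
    simp [LinearMap.rTensor_tmul, LinearMap.lTensor_tmul]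
  rw [Psi]
  simp only [LinearMap.comp_apply]
  rw [← LinearMap.comp_apply (map _ _), h2, h1]
  simp only [LinearMap.comp_apply]
  rw [show (LinearMap.rTensor B (LinearMap.id (M := B))) (Coalgebra.comul (R := K) x)
      = Coalgebra.comul x by simp]
  rw [HopfAlgebra.mul_antipode_lTensor_comul_apply, Algebra.algebraMap_eq_smul_one]

lemma der_Phi (ν : B →ₗ[K] K)
    (hν : ∀ u v : B, ν (u * v) = ε u * ν v + ε v * ν u) (x y : B) :
    Phi ν (x * y) = ε x • Phi ν y + ε y • Phi ν x := by
  classical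
  set rx := Coalgebra.Repr.arbitrary K x with hrx
  set ry := Coalgebra.Repr.arbitrary K y with hry
  let rx1 : ∀ k : B × B, Coalgebra.Repr K (rx.left k) (B × B) := fun k => Coalgebra.Repr.arbitrary K _
  let ry1 : ∀ m : B × B, Coalgebra.Repr K (ry.left m) (B × B) := fun m => Coalgebra.Repr.arbitrary K _
  have expand := Phi_repr ν (mulRepr rx ry)
    (fun p => mulRepr (rx1 p.1) (ry1 p.2))
  have e1 : ∀ (p : (B × B) × (B × B)), p ∈ (mulRepr rx ry).index →
      (∑ q ∈ ((mulRepr (rx1 p.1) (ry1 p.2)).index),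
        ν ((mulRepr (rx1 p.1) (ry1 p.2)).right q) •
          (S ((mulRepr (rx1 p.1) (ry1 p.2)).left q) *
            (mulRepr rx ry).right p)) =
      ∑ l ∈ (rx1 p.1).index, ∑ n ∈ (ry1 p.2).index,
        ((ε ((rx1 p.1).right l) • (S ((rx1 p.1).left l) * rx.right p.1)) *
           (ν ((ry1 p.2).right n) • (S ((ry1 p.2).left n) * ry.right p.2)) +
         (ν ((rx1 p.1).right l) • (S ((rx1 p.1).left l) * rx.right p.1)) *
           (ε ((ry1 p.2).right n) • (S ((ry1 p.2).left n) * ry.right p.2))) := by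
    intro p _
    refine Eq.trans (Finset.sum_product _ _ _) ?_
    refine Finset.sum_congr rfl fun l _ => Finset.sum_congr rfl fun n _ => ?_
    have hm : (mulRepr (rx1 p.1) (ry1 p.2)).right (l, n) =
        (rx1 p.1).right l * (ry1 p.2).right n := rfl
    have hm2 : (mulRepr (rx1 p.1) (ry1 p.2)).left (l, n) =
        (rx1 p.1).left l * (ry1 p.2).left n := rfl
    have hm3 : (mulRepr rx ry).right p = rx.right p.1 * ry.right p.2 := rfl
    rw [hm, hm2, hm3, hν, antipode_mul']
    rw [add_smul]
    congr 1
    · rw [smul_mul_smul_comm]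
      congr 1
      ring
    · rw [smul_mul_smul_comm]
      congr 1
      · ring
      · ring
  have e2 : Phi ν (x * y) =
      ∑ i ∈ rx.index, ∑ j ∈ ry.index,
        ∑ l ∈ (rx1 i).index, ∑ n ∈ (ry1 j).index,
        ((ε ((rx1 i).right l) • (S ((rx1 i).left l) * rx.right i)) *
           (ν ((ry1 j).right n) • (S ((ry1 j).left n) * ry.right j)) +
         (ν ((rx1 i).right l) • (S ((rx1 i).left l) * rx.right i)) *
           (ε ((ry1 j).right n) • (S ((ry1 j).left n) * ry.right j))) := by
    rw [expand]
    refine Eq.trans (Finset.sum_congr rfl e1) ?_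
    exact Finset.sum_product _ _ _
  rw [e2]
  simp only [Finset.sum_add_distrib]
  congr 1
  · -- `(∑ ε-part over x) * (∑ ν-part over y)`
    have fact : (∑ i ∈ rx.index, ∑ l ∈ (rx1 i).index,
          ε ((rx1 i).right l) • (S ((rx1 i).left l) * rx.right i)) *
        (∑ j ∈ ry.index, ∑ n ∈ (ry1 j).index,
          ν ((ry1 j).right n) • (S ((ry1 j).left n) * ry.right j)) =
        ∑ i ∈ rx.index, ∑ j ∈ ry.index,
          ∑ l ∈ (rx1 i).index, ∑ n ∈ (ry1 j).index,
          (ε ((rx1 i).right l) • (S ((rx1 i).left l) * rx.right i)) *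
            (ν ((ry1 j).right n) • (S ((ry1 j).left n) * ry.right j)) := by
      rw [Finset.sum_mul_sum]
      exact Finset.sum_congr rfl fun i _ => Finset.sum_congr rfl fun j _ =>
        Finset.sum_mul_sum _ _ _ _
    rw [← fact]
    rw [(Phi_repr (Coalgebra.counit) rx rx1).symm.trans (Phi_counit x),
      ← Phi_repr ν ry ry1, smul_mul_assoc, one_mul]
  · have fact : (∑ i ∈ rx.index, ∑ l ∈ (rx1 i).index,
          ν ((rx1 i).right l) • (S ((rx1 i).left l) * rx.right i)) *
        (∑ j ∈ ry.index, ∑ n ∈ (ry1 j).index,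
          ε ((ry1 j).right n) • (S ((ry1 j).left n) * ry.right j)) =
        ∑ i ∈ rx.index, ∑ j ∈ ry.index,
          ∑ l ∈ (rx1 i).index, ∑ n ∈ (ry1 j).index,
          (ν ((rx1 i).right l) • (S ((rx1 i).left l) * rx.right i)) *
            (ε ((ry1 j).right n) • (S ((ry1 j).left n) * ry.right j)) := by
      rw [Finset.sum_mul_sum]
      exact Finset.sum_congr rfl fun i _ => Finset.sum_congr rfl fun j _ =>
        Finset.sum_mul_sum _ _ _ _
    rw [← fact]
    rw [(Phi_repr (Coalgebra.counit) ry ry1).symm.trans (Phi_counit y),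
      ← Phi_repr ν rx rx1, mul_smul_comm, mul_one]

lemma der_Psi (ν : B →ₗ[K] K)
    (hν : ∀ u v : B, ν (u * v) = ε u * ν v + ε v * ν u) (x y : B) :
    Psi ν (x * y) = ε x • Psi ν y + ε y • Psi ν x := by
  classical
  set rx := Coalgebra.Repr.arbitrary K x with hrx
  set ry := Coalgebra.Repr.arbitrary K y with hry
  let rx1 : ∀ k : B × B, Coalgebra.Repr K (rx.left k) (B × B) := fun k => Coalgebra.Repr.arbitrary K _
  let ry1 : ∀ m : B × B, Coalgebra.Repr K (ry.left m) (B × B) := fun m => Coalgebra.Repr.arbitrary K _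
  have expand := Psi_repr ν (mulRepr rx ry)
    (fun p => mulRepr (rx1 p.1) (ry1 p.2))
  have e1 : ∀ (p : (B × B) × (B × B)), p ∈ (mulRepr rx ry).index →
      (∑ q ∈ ((mulRepr (rx1 p.1) (ry1 p.2)).index),
        ν ((mulRepr (rx1 p.1) (ry1 p.2)).right q) •
          ((mulRepr (rx1 p.1) (ry1 p.2)).left q *
            S ((mulRepr rx ry).right p))) =
      ∑ l ∈ (rx1 p.1).index, ∑ n ∈ (ry1 p.2).index,
        ((ε ((rx1 p.1).right l) • ((rx1 p.1).left l * S (rx.right p.1))) *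
           (ν ((ry1 p.2).right n) • ((ry1 p.2).left n * S (ry.right p.2))) +
         (ν ((rx1 p.1).right l) • ((rx1 p.1).left l * S (rx.right p.1))) *
           (ε ((ry1 p.2).right n) • ((ry1 p.2).left n * S (ry.right p.2)))) := by
    intro p _
    refine Eq.trans (Finset.sum_product _ _ _) ?_
    refine Finset.sum_congr rfl fun l _ => Finset.sum_congr rfl fun n _ => ?_
    have hm : (mulRepr (rx1 p.1) (ry1 p.2)).right (l, n) =
        (rx1 p.1).right l * (ry1 p.2).right n := rfl
    have hm2 : (mulRepr (rx1 p.1) (ry1 p.2)).left (l, n) =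
        (rx1 p.1).left l * (ry1 p.2).left n := rfl
    have hm3 : (mulRepr rx ry).right p = rx.right p.1 * ry.right p.2 := rfl
    rw [hm, hm2, hm3, hν, antipode_mul']
    rw [add_smul]
    congr 1
    · rw [smul_mul_smul_comm]
      congr 1
      ring
    · rw [smul_mul_smul_comm]
      congr 1
      · ring
      · ring
  have e2 : Psi ν (x * y) =
      ∑ i ∈ rx.index, ∑ j ∈ ry.index,
        ∑ l ∈ (rx1 i).index, ∑ n ∈ (ry1 j).index,
        ((ε ((rx1 i).right l) • ((rx1 i).left l * S (rx.right i))) *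
           (ν ((ry1 j).right n) • ((ry1 j).left n * S (ry.right j))) +
         (ν ((rx1 i).right l) • ((rx1 i).left l * S (rx.right i))) *
           (ε ((ry1 j).right n) • ((ry1 j).left n * S (ry.right j)))) := by
    rw [expand]
    refine Eq.trans (Finset.sum_congr rfl e1) ?_
    exact Finset.sum_product _ _ _
  rw [e2]
  simp only [Finset.sum_add_distrib]
  congr 1
  · have fact : (∑ i ∈ rx.index, ∑ l ∈ (rx1 i).index,
          ε ((rx1 i).right l) • ((rx1 i).left l * S (rx.right i))) *
        (∑ j ∈ ry.index, ∑ n ∈ (ry1 j).index,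
          ν ((ry1 j).right n) • ((ry1 j).left n * S (ry.right j))) =
        ∑ i ∈ rx.index, ∑ j ∈ ry.index,
          ∑ l ∈ (rx1 i).index, ∑ n ∈ (ry1 j).index,
          (ε ((rx1 i).right l) • ((rx1 i).left l * S (rx.right i))) *
            (ν ((ry1 j).right n) • ((ry1 j).left n * S (ry.right j))) := by
      rw [Finset.sum_mul_sum]
      exact Finset.sum_congr rfl fun i _ => Finset.sum_congr rfl fun j _ =>
        Finset.sum_mul_sum _ _ _ _
    rw [← fact]
    rw [(Psi_repr (Coalgebra.counit) rx rx1).symm.trans (Psi_counit x),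
      ← Psi_repr ν ry ry1, smul_mul_assoc, one_mul]
  · have fact : (∑ i ∈ rx.index, ∑ l ∈ (rx1 i).index,
          ν ((rx1 i).right l) • ((rx1 i).left l * S (rx.right i))) *
        (∑ j ∈ ry.index, ∑ n ∈ (ry1 j).index,
          ε ((ry1 j).right n) • ((ry1 j).left n * S (ry.right j))) =
        ∑ i ∈ rx.index, ∑ j ∈ ry.index,
          ∑ l ∈ (rx1 i).index, ∑ n ∈ (ry1 j).index,
          (ν ((rx1 i).right l) • ((rx1 i).left l * S (rx.right i))) *
            (ε ((ry1 j).right n) • ((ry1 j).left n * S (ry.right j))) := by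
      rw [Finset.sum_mul_sum]
      exact Finset.sum_congr rfl fun i _ => Finset.sum_congr rfl fun j _ =>
        Finset.sum_mul_sum _ _ _ _
    rw [← fact]
    rw [(Psi_repr (Coalgebra.counit) ry ry1).symm.trans (Psi_counit y),
      ← Psi_repr ν rx rx1, mul_smul_comm, mul_one]

/-- `y ⊗ z ↦ ν(y) • z` -/
noncomputable def gId (ν : B →ₗ[K] K) : B ⊗[K] B →ₗ[K] B :=
  (TensorProduct.lid K B).toLinearMap ∘ₗ map ν LinearMap.id

@[simp] lemma gId_tmul (ν : B →ₗ[K] K) (y z : B) :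
    gId ν (y ⊗ₜ[K] z) = ν y • z := by
  simp [gId]

/-- `y ⊗ z ↦ ν(y) • S(z)` -/
noncomputable def gS (ν : B →ₗ[K] K) : B ⊗[K] B →ₗ[K] B :=
  (TensorProduct.lid K B).toLinearMap ∘ₗ map ν (HopfAlgebra.antipode (R := K))

@[simp] lemma gS_tmul (ν : B →ₗ[K] K) (y z : B) :
    gS ν (y ⊗ₜ[K] z) = ν y • HopfAlgebra.antipode (R := K) z := by
  simp [gS]

lemma der_vanish {M : Type*} [AddCommGroup M] [Module K M] (d : B →ₗ[K] M)
    (hd : ∀ u v : B, d (u * v) = ε u • d v + ε v • d u) :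
    ∀ z ∈ augSquare K B, d z = 0 := by
  have h1 : d 1 = 0 := by
    have h := hd 1 1
    rw [mul_one] at h
    simp only [Bialgebra.counit_one, one_smul] at h
    exact (right_eq_add.mp h)
  intro z hz
  rcases Submodule.mem_sup.mp hz with ⟨u, hu, v, hv, rfl⟩
  rcases Submodule.mem_span_singleton.mp hu with ⟨k, rfl⟩
  have hv' : v ∈ (RingHom.ker (Bialgebra.counitAlgHom K B).toRingHom) ^ 2 := hv
  rw [pow_two] at hv'
  have hdv : d v = 0 := by
    refine Submodule.mul_induction_on hv' (fun m hm n hn => ?_)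
      (fun a b ha hb => by rw [map_add, ha, hb, add_zero])
    have hm' : ε m = 0 := by
      have := RingHom.mem_ker.mp hm
      simpa using this
    have hn' : ε n = 0 := by
      have := RingHom.mem_ker.mp hn
      simpa using this
    rw [hd m n, hm', hn', zero_smul, zero_smul, add_zero]
  rw [map_add, map_smul, h1, smul_zero, zero_add, hdv]

lemma psiMap_rep (t : B) (μ : B →ₗ[K] K) {ι : Type*} (s : Finset ι) (p q : ι → B)
    (h : ∑ i ∈ s, p i ⊗ₜ[K] q i = Coalgebra.comul t) :
    psiMap K B t μ = ∑ i ∈ s, μ (p i) • (augSquare K B).mkQ (q i) := by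
  rw [psiMap, ← h, map_sum]
  rfl

lemma factor_aux {M : Type*} [AddCommGroup M] [Module K M] (t b : B) (μ : B →ₗ[K] K)
    (hμ : psiMap K B t μ = (augSquare K B).mkQ b)
    (d : B →ₗ[K] M) (hd : ∀ z ∈ augSquare K B, d z = 0)
    {ι : Type*} (s : Finset ι) (p q : ι → B)
    (h : ∑ i ∈ s, p i ⊗ₜ[K] q i = Coalgebra.comul t) :
    d b = ∑ i ∈ s, μ (p i) • d (q i) := by
  have hker : augSquare K B ≤ LinearMap.ker d := fun z hz => LinearMap.mem_ker.mpr (hd z hz)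
  have h2 : ∀ c : B, ((augSquare K B).liftQ d hker) ((augSquare K B).mkQ c) = d c :=
    fun c => by rw [Submodule.mkQ_apply, Submodule.liftQ_apply]
  calc d b = ((augSquare K B).liftQ d hker) ((augSquare K B).mkQ b) := (h2 b).symm
    _ = ((augSquare K B).liftQ d hker) (psiMap K B t μ) := by rw [hμ]
    _ = ((augSquare K B).liftQ d hker)
          (∑ i ∈ s, μ (p i) • (augSquare K B).mkQ (q i)) := by rw [psiMap_rep t μ s p q h]
    _ = ∑ i ∈ s, μ (p i) • d (q i) := by
        rw [map_sum]
        exact Finset.sum_congr rfl fun i _ => by rw [map_smul, h2]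

end Aux
/-- Let `B` be a commutative Hopf algebra and `t ∈ B` a
trace-like element (cosymmetric, and with the map `ψ : g → I/I²`,
`μ ↦ μ(t')p(t'')` bijective on derivations).  Then the bilinear form
`•_t : B × B → K`, `b •_t c = b̄(c)` — where `b̄` is the unique derivation
mapped to the class of `b` under `ψ` — is a balanced biderivation, and
moreover `b •_t c = (b •_t t')(c •_t t'')` for all `b, c ∈ B`. -/
theorem trace_like_balanced_biderivation
    {K B : Type*} [CommRing K] [CommRing B] [HopfAlgebra K B] (t : B)
    (hcos : TensorProduct.comm K B B (Coalgebra.comul t) = Coalgebra.comul (R := K) t)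
    (hbij : Function.Bijective
      (fun μ : {μ : B →ₗ[K] K // IsCounitDer K B μ} => psiMap K B t μ.1))
    (bar : B → {μ : B →ₗ[K] K // IsCounitDer K B μ})
    (hbar : ∀ b : B, psiMap K B t (bar b).1 = (augSquare K B).mkQ b) :
    -- `•_t` is bilinear (linearity in the second variable holds since each
    -- `b̄` is a linear map):
    (∀ b b' c : B, (bar (b + b')).1 c = (bar b).1 c + (bar b').1 c) ∧
    (∀ (k : K) (b c : B), (bar (k • b)).1 c = k * (bar b).1 c) ∧
    -- `•_t` is a biderivation:
    (∀ b c d : B,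
      (bar (b * c)).1 d =
        Coalgebra.counit (R := K) b * (bar c).1 d +
          Coalgebra.counit (R := K) c * (bar b).1 d) ∧
    (∀ b c d : B,
      (bar d).1 (b * c) =
        Coalgebra.counit (R := K) b * (bar d).1 c +
          Coalgebra.counit (R := K) c * (bar d).1 b) ∧
    -- `•_t` is balanced: `(b • c'')·s(c')c''' = (c • b'')·s(b''')b'`:
    (∀ (b c : B) (sb sc : Finset ℕ) (b1 b2 b3 c1 c2 c3 : ℕ → B),
      (∑ i ∈ sb, (b1 i ⊗ₜ[K] b2 i) ⊗ₜ[K] b3 i = comulIter3 K B b) →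
      (∑ j ∈ sc, (c1 j ⊗ₜ[K] c2 j) ⊗ₜ[K] c3 j = comulIter3 K B c) →
      ∑ j ∈ sc, (bar b).1 (c2 j) • (HopfAlgebra.antipode (R := K) (c1 j) * c3 j) =
        ∑ i ∈ sb, (bar c).1 (b2 i) • (HopfAlgebra.antipode (R := K) (b3 i) * b1 i)) ∧
    -- the formula `b •_t c = (b •_t t')(c •_t t'')`:
    (∀ (b c : B) (st : Finset ℕ) (t1 t2 : ℕ → B),
      (∑ i ∈ st, t1 i ⊗ₜ[K] t2 i = Coalgebra.comul t) →
      (bar b).1 c = ∑ i ∈ st, (bar b).1 (t1 i) * (bar c).1 (t2 i)) := by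
  classical
  have hswap : ∀ (s : Finset ℕ) (p q : ℕ → B),
      (∑ i ∈ s, p i ⊗ₜ[K] q i = Coalgebra.comul t) →
      (∑ i ∈ s, q i ⊗ₜ[K] p i = Coalgebra.comul t) := by
    intro s p q h
    calc ∑ i ∈ s, q i ⊗ₜ[K] p i
        = TensorProduct.comm K B B (∑ i ∈ s, p i ⊗ₜ[K] q i) := by
          rw [map_sum]; rfl
      _ = TensorProduct.comm K B B (Coalgebra.comul t) := by rw [h]
      _ = Coalgebra.comul t := hcos
  have hvan : ∀ b : B, ∀ z ∈ augSquare K B, (bar b).1 z = 0 := by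
    intro b
    refine der_vanish (bar b).1 (fun u v => ?_)
    rw [(bar b).2 u v, smul_eq_mul, smul_eq_mul]
  -- additivity
  have claim1 : ∀ b b' c : B, (bar (b + b')).1 c = (bar b).1 c + (bar b').1 c := by
    intro b b' c
    have hder : IsCounitDer K B ((bar b).1 + (bar b').1) := by
      intro u v
      simp only [LinearMap.add_apply, (bar b).2 u v, (bar b').2 u v]
      ring
    have hψ : psiMap K B t ((bar b).1 + (bar b').1) = (augSquare K B).mkQ (b + b') := by
      have rt := Coalgebra.Repr.arbitrary K t
      rw [psiMap_rep t _ rt.index rt.left rt.right rt.eq]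
      rw [map_add]
      rw [← hbar b, ← hbar b', psiMap_rep t (bar b).1 rt.index rt.left rt.right rt.eq,
        psiMap_rep t (bar b').1 rt.index rt.left rt.right rt.eq, ← Finset.sum_add_distrib]
      exact Finset.sum_congr rfl fun i _ => by
        rw [LinearMap.add_apply, add_smul]
    have key : (⟨(bar b).1 + (bar b').1, hder⟩ : {μ : B →ₗ[K] K // IsCounitDer K B μ}) =
        bar (b + b') := hbij.1 (by
          show psiMap K B t ((bar b).1 + (bar b').1) = psiMap K B t (bar (b + b')).1
          rw [hψ, hbar])
    rw [← key]
    rfl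
  -- homogeneity
  have claim2 : ∀ (k : K) (b c : B), (bar (k • b)).1 c = k * (bar b).1 c := by
    intro k b c
    have hder : IsCounitDer K B (k • (bar b).1) := by
      intro u v
      simp only [LinearMap.smul_apply, (bar b).2 u v, smul_eq_mul]
      ring
    have hψ : psiMap K B t (k • (bar b).1) = (augSquare K B).mkQ (k • b) := by
      have rt := Coalgebra.Repr.arbitrary K t
      rw [psiMap_rep t _ rt.index rt.left rt.right rt.eq]
      rw [map_smul, ← hbar b, psiMap_rep t (bar b).1 rt.index rt.left rt.right rt.eq,
        Finset.smul_sum]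
      exact Finset.sum_congr rfl fun i _ => by
        rw [LinearMap.smul_apply, smul_eq_mul, mul_smul]
    have key : (⟨k • (bar b).1, hder⟩ : {μ : B →ₗ[K] K // IsCounitDer K B μ}) =
        bar (k • b) := hbij.1 (by
          show psiMap K B t (k • (bar b).1) = psiMap K B t (bar (k • b)).1
          rw [hψ, hbar])
    rw [← key]
    simp
  -- biderivation in the first variable
  have claim3 : ∀ b c d : B, (bar (b * c)).1 d =
      Coalgebra.counit (R := K) b * (bar c).1 d +
        Coalgebra.counit (R := K) c * (bar b).1 d := by
    intro b c d
    set μ : B →ₗ[K] K := Coalgebra.counit (R := K) b • (bar c).1 +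
      Coalgebra.counit (R := K) c • (bar b).1 with hμdef
    have hder : IsCounitDer K B μ := by
      intro u v
      simp only [hμdef, LinearMap.add_apply, LinearMap.smul_apply, (bar b).2 u v,
        (bar c).2 u v, smul_eq_mul]
      ring
    have hmem : b * c - (Coalgebra.counit (R := K) b • c + Coalgebra.counit (R := K) c • b)
        ∈ augSquare K B := by
      have hfac : b * c - (Coalgebra.counit (R := K) b • c + Coalgebra.counit (R := K) c • b)
          = (b - Coalgebra.counit (R := K) b • 1) * (c - Coalgebra.counit (R := K) c • 1) -
            (Coalgebra.counit (R := K) b * Coalgebra.counit (R := K) c) • 1 := by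
        simp only [Algebra.smul_def, map_mul]
        ring
      rw [hfac]
      refine Submodule.sub_mem _ ?_ ?_
      · refine Submodule.mem_sup_right ?_
        have hb : b - Coalgebra.counit (R := K) b • 1 ∈
            RingHom.ker (Bialgebra.counitAlgHom K B).toRingHom := by
          rw [RingHom.mem_ker]
          simp [Algebra.smul_def]
        have hc : c - Coalgebra.counit (R := K) c • 1 ∈
            RingHom.ker (Bialgebra.counitAlgHom K B).toRingHom := by
          rw [RingHom.mem_ker]
          simp [Algebra.smul_def]
        show _ ∈ Submodule.restrictScalars K
          ((RingHom.ker (Bialgebra.counitAlgHom K B).toRingHom) ^ 2)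
        rw [Submodule.restrictScalars_mem, pow_two]
        exact Ideal.mul_mem_mul hb hc
      · exact Submodule.mem_sup_left
          (Submodule.smul_mem _ _ (Submodule.mem_span_singleton_self _))
    have hquot : (augSquare K B).mkQ (b * c) =
        Coalgebra.counit (R := K) b • (augSquare K B).mkQ c +
          Coalgebra.counit (R := K) c • (augSquare K B).mkQ b := by
      rw [← map_smul, ← map_smul, ← map_add, Submodule.mkQ_apply, Submodule.mkQ_apply]
      exact (Submodule.Quotient.eq _).mpr hmem
    have hψ : psiMap K B t μ = (augSquare K B).mkQ (b * c) := by
      have rt := Coalgebra.Repr.arbitrary K t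
      have hexp : psiMap K B t μ =
          Coalgebra.counit (R := K) b • psiMap K B t (bar c).1 +
            Coalgebra.counit (R := K) c • psiMap K B t (bar b).1 := by
        rw [psiMap_rep t μ rt.index rt.left rt.right rt.eq,
          psiMap_rep t (bar c).1 rt.index rt.left rt.right rt.eq,
          psiMap_rep t (bar b).1 rt.index rt.left rt.right rt.eq,
          Finset.smul_sum, Finset.smul_sum, ← Finset.sum_add_distrib]
        refine Finset.sum_congr rfl fun i _ => ?_
        simp only [hμdef, LinearMap.add_apply, LinearMap.smul_apply, smul_eq_mul]
        rw [add_smul, mul_smul, mul_smul]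
      rw [hexp, hbar c, hbar b]
      exact hquot.symm
    have key : (⟨μ, hder⟩ : {μ : B →ₗ[K] K // IsCounitDer K B μ}) =
        bar (b * c) := hbij.1 (by
          show psiMap K B t μ = psiMap K B t (bar (b * c)).1
          rw [hψ, hbar])
    rw [← key]
    simp only [hμdef, LinearMap.add_apply, LinearMap.smul_apply, smul_eq_mul]
  -- biderivation in the second variable
  have claim4 : ∀ b c d : B, (bar d).1 (b * c) =
      Coalgebra.counit (R := K) b * (bar d).1 c +
        Coalgebra.counit (R := K) c * (bar d).1 b := fun b c d => (bar d).2 b c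
  -- the formula
  have claim6 : ∀ (b c : B) (st : Finset ℕ) (t1 t2 : ℕ → B),
      (∑ i ∈ st, t1 i ⊗ₜ[K] t2 i = Coalgebra.comul t) →
      (bar b).1 c = ∑ i ∈ st, (bar b).1 (t1 i) * (bar c).1 (t2 i) := by
    intro b c st t1 t2 ht
    have ht' := hswap st t1 t2 ht
    have h := factor_aux t c (bar c).1 (hbar c) (bar b).1 (hvan b) st t2 t1 ht'
    rw [h]
    exact Finset.sum_congr rfl fun i _ => by rw [smul_eq_mul, mul_comm]
  -- balancedness
  have claim5 : ∀ (b c : B) (sb sc : Finset ℕ) (b1 b2 b3 c1 c2 c3 : ℕ → B),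
      (∑ i ∈ sb, (b1 i ⊗ₜ[K] b2 i) ⊗ₜ[K] b3 i = comulIter3 K B b) →
      (∑ j ∈ sc, (c1 j ⊗ₜ[K] c2 j) ⊗ₜ[K] c3 j = comulIter3 K B c) →
      ∑ j ∈ sc, (bar b).1 (c2 j) • (HopfAlgebra.antipode (R := K) (c1 j) * c3 j) =
        ∑ i ∈ sb, (bar c).1 (b2 i) • (HopfAlgebra.antipode (R := K) (b3 i) * b1 i) := by
    intro b c sb sc b1 b2 b3 c1 c2 c3 hb hc
    set μb : B →ₗ[K] K := (bar b).1 with hμb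
    set μc : B →ₗ[K] K := (bar c).1 with hμc
    -- the two sides as `Phi`/`Psi` values
    have hL : ∑ j ∈ sc, μb (c2 j) • (HopfAlgebra.antipode (R := K) (c1 j) * c3 j) =
        Phi μb c := by
      have h := congrArg (LinearMap.mul' K B ∘ₗ LinearMap.rTensor B (fS μb)) hc
      rw [map_sum] at h
      have h2 : ∀ j ∈ sc,
          (LinearMap.mul' K B ∘ₗ LinearMap.rTensor B (fS μb))
            ((c1 j ⊗ₜ[K] c2 j) ⊗ₜ[K] c3 j) =
          μb (c2 j) • (HopfAlgebra.antipode (R := K) (c1 j) * c3 j) := by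
        intro j _
        simp [smul_mul_assoc]
      rw [Finset.sum_congr rfl h2] at h
      exact h
    have hR : ∑ i ∈ sb, μc (b2 i) • (HopfAlgebra.antipode (R := K) (b3 i) * b1 i) =
        Psi μc b := by
      have h := congrArg (LinearMap.mul' K B ∘ₗ
        map (fId μc) (HopfAlgebra.antipode (R := K))) hb
      rw [map_sum] at h
      have h2 : ∀ i ∈ sb,
          (LinearMap.mul' K B ∘ₗ map (fId μc) (HopfAlgebra.antipode (R := K)))
            ((b1 i ⊗ₜ[K] b2 i) ⊗ₜ[K] b3 i) =
          μc (b2 i) • (HopfAlgebra.antipode (R := K) (b3 i) * b1 i) := by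
        intro i _
        simp [smul_mul_assoc, mul_comm]
      rw [Finset.sum_congr rfl h2] at h
      exact h
    rw [hL, hR]
    -- derivation properties
    have vanPhi : ∀ z ∈ augSquare K B, Phi μb z = 0 :=
      der_vanish (Phi μb) (fun u v => der_Phi μb (bar b).2 u v)
    have vanPsi : ∀ z ∈ augSquare K B, Psi μc z = 0 :=
      der_vanish (Psi μc) (fun u v => der_Psi μc (bar c).2 u v)
    -- representations of `t`
    set rt := Coalgebra.Repr.arbitrary K t with hrt
    let rt1 : ∀ i : B × B, Coalgebra.Repr K (rt.left i) (B × B) :=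
      fun i => Coalgebra.Repr.arbitrary K _
    let rt2 : ∀ i : B × B, Coalgebra.Repr K (rt.right i) (B × B) :=
      fun i => Coalgebra.Repr.arbitrary K _
    let rt21 : ∀ i : B × B, ∀ k : B × B, Coalgebra.Repr K ((rt2 i).left k) (B × B) :=
      fun i k => Coalgebra.Repr.arbitrary K _
    let rt22 : ∀ i : B × B, ∀ k : B × B, Coalgebra.Repr K ((rt2 i).right k) (B × B) :=
      fun i k => Coalgebra.Repr.arbitrary K _
    -- inner contraction maps
    set L1 : B ⊗[K] (B ⊗[K] B) →ₗ[K] B :=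
      LinearMap.mul' K B ∘ₗ map (HopfAlgebra.antipode (R := K)) (gId μb) with hL1
    set L2 : B ⊗[K] (B ⊗[K] B) →ₗ[K] B :=
      LinearMap.mul' K B ∘ₗ map LinearMap.id (gS μc) with hL2
    set A1 : B ⊗[K] B →ₗ[K] B :=
      LinearMap.mul' K B ∘ₗ map (HopfAlgebra.antipode (R := K))
        (gId μb ∘ₗ Coalgebra.comul) with hA1
    set A2 : B ⊗[K] B →ₗ[K] B :=
      LinearMap.mul' K B ∘ₗ map LinearMap.id
        (gS μc ∘ₗ Coalgebra.comul) with hA2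
    set Lam1 : B ⊗[K] (B ⊗[K] B) →ₗ[K] B := gId μc ∘ₗ LinearMap.lTensor B A1 with hLam1
    set Lam2 : B ⊗[K] (B ⊗[K] B) →ₗ[K] B := gId μb ∘ₗ LinearMap.lTensor B A2 with hLam2
    -- left-hand side chain
    have chainL : Phi μb c =
        ∑ i ∈ rt.index, gS μc (Coalgebra.comul (rt.left i)) *
          gId μb (Coalgebra.comul (rt.right i)) := by
      calc Phi μb c
          = ∑ i ∈ rt.index, μc (rt.left i) • Phi μb (rt.right i) :=
            factor_aux t c μc (hbar c) (Phi μb) vanPhi rt.index rt.left rt.right rt.eq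
        _ = ∑ i ∈ rt.index, ∑ k ∈ (rt2 i).index, Lam1 (rt.left i ⊗ₜ[K]
              ((rt2 i).left k ⊗ₜ[K] (rt2 i).right k)) := by
            refine Finset.sum_congr rfl fun i _ => ?_
            rw [Phi_repr μb (rt2 i) (rt21 i)]
            have e1 : ∑ k ∈ (rt2 i).index, ∑ l ∈ (rt21 i k).index,
                μb ((rt21 i k).right l) •
                  (HopfAlgebra.antipode (R := K) ((rt21 i k).left l) * (rt2 i).right k) =
                ∑ k ∈ (rt2 i).index, ∑ l ∈ (rt21 i k).index,
                  L1 ((rt21 i k).left l ⊗ₜ[K]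
                    ((rt21 i k).right l ⊗ₜ[K] (rt2 i).right k)) := by
              refine Finset.sum_congr rfl fun k _ => Finset.sum_congr rfl fun l _ => ?_
              rw [hL1]
              simp [mul_smul_comm]
            rw [e1, (transfer L1 (rt2 i) (rt21 i) (rt22 i)).symm]
            rw [Finset.smul_sum]
            refine Finset.sum_congr rfl fun k _ => ?_
            rw [hLam1]
            simp only [LinearMap.comp_apply, LinearMap.lTensor_tmul, gId_tmul]
            congr 1
            rw [hA1]
            simp only [LinearMap.comp_apply, map_tmul, LinearMap.mul'_apply]
            rw [hL1]
            simp only [LinearMap.comp_apply, map_tmul, LinearMap.mul'_apply]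
            rw [← Finset.mul_sum, ← map_sum, (rt22 i k).eq]
        _ = ∑ i ∈ rt.index, ∑ m ∈ (rt1 i).index, Lam1 ((rt1 i).left m ⊗ₜ[K]
              ((rt1 i).right m ⊗ₜ[K] rt.right i)) := transfer Lam1 rt rt1 rt2
        _ = ∑ i ∈ rt.index, gS μc (Coalgebra.comul (rt.left i)) *
              gId μb (Coalgebra.comul (rt.right i)) := by
            refine Finset.sum_congr rfl fun i _ => ?_
            rw [← (rt1 i).eq, map_sum, Finset.sum_mul]
            refine Finset.sum_congr rfl fun m _ => ?_
            rw [hLam1]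
            simp only [LinearMap.comp_apply, LinearMap.lTensor_tmul, gId_tmul,
              gS_tmul, hA1, map_tmul, LinearMap.mul'_apply]
            simp [smul_mul_assoc]
    -- right-hand side chain
    have chainR : Psi μc b =
        ∑ i ∈ rt.index, gId μb (Coalgebra.comul (rt.left i)) *
          gS μc (Coalgebra.comul (rt.right i)) := by
      calc Psi μc b
          = ∑ i ∈ rt.index, μb (rt.left i) • Psi μc (rt.right i) :=
            factor_aux t b μb (hbar b) (Psi μc) vanPsi rt.index rt.left rt.right rt.eq
        _ = ∑ i ∈ rt.index, ∑ k ∈ (rt2 i).index, Lam2 (rt.left i ⊗ₜ[K]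
              ((rt2 i).left k ⊗ₜ[K] (rt2 i).right k)) := by
            refine Finset.sum_congr rfl fun i _ => ?_
            rw [Psi_repr μc (rt2 i) (rt21 i)]
            have e1 : ∑ k ∈ (rt2 i).index, ∑ l ∈ (rt21 i k).index,
                μc ((rt21 i k).right l) •
                  ((rt21 i k).left l * HopfAlgebra.antipode (R := K) ((rt2 i).right k)) =
                ∑ k ∈ (rt2 i).index, ∑ l ∈ (rt21 i k).index,
                  L2 ((rt21 i k).left l ⊗ₜ[K]
                    ((rt21 i k).right l ⊗ₜ[K] (rt2 i).right k)) := by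
              refine Finset.sum_congr rfl fun k _ => Finset.sum_congr rfl fun l _ => ?_
              rw [hL2]
              simp [mul_smul_comm]
            rw [e1, (transfer L2 (rt2 i) (rt21 i) (rt22 i)).symm]
            rw [Finset.smul_sum]
            refine Finset.sum_congr rfl fun k _ => ?_
            rw [hLam2]
            simp only [LinearMap.comp_apply, LinearMap.lTensor_tmul, gId_tmul]
            congr 1
            rw [hA2]
            simp only [LinearMap.comp_apply, map_tmul, LinearMap.mul'_apply,
              LinearMap.id_coe, id_eq]
            rw [hL2]
            simp only [LinearMap.comp_apply, map_tmul, LinearMap.mul'_apply,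
              LinearMap.id_coe, id_eq]
            rw [← Finset.mul_sum, ← map_sum, (rt22 i k).eq]
        _ = ∑ i ∈ rt.index, ∑ m ∈ (rt1 i).index, Lam2 ((rt1 i).left m ⊗ₜ[K]
              ((rt1 i).right m ⊗ₜ[K] rt.right i)) := transfer Lam2 rt rt1 rt2
        _ = ∑ i ∈ rt.index, gId μb (Coalgebra.comul (rt.left i)) *
              gS μc (Coalgebra.comul (rt.right i)) := by
            refine Finset.sum_congr rfl fun i _ => ?_
            rw [← (rt1 i).eq, map_sum, Finset.sum_mul]
            refine Finset.sum_congr rfl fun m _ => ?_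
            rw [hLam2]
            simp only [LinearMap.comp_apply, LinearMap.lTensor_tmul, gId_tmul,
              gS_tmul, hA2, map_tmul, LinearMap.mul'_apply, LinearMap.id_coe, id_eq]
            simp [smul_mul_assoc]
    -- symmetry via cosymmetry of `t`
    have final : ∑ i ∈ rt.index, gS μc (Coalgebra.comul (rt.left i)) *
          gId μb (Coalgebra.comul (rt.right i)) =
        ∑ i ∈ rt.index, gId μb (Coalgebra.comul (rt.left i)) *
          gS μc (Coalgebra.comul (rt.right i)) := by
      set W : B ⊗[K] B →ₗ[K] B :=
        LinearMap.mul' K B ∘ₗ map (gS μc ∘ₗ Coalgebra.comul)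
          (gId μb ∘ₗ Coalgebra.comul) with hW
      set W' : B ⊗[K] B →ₗ[K] B :=
        LinearMap.mul' K B ∘ₗ map (gId μb ∘ₗ Coalgebra.comul)
          (gS μc ∘ₗ Coalgebra.comul) with hW'
      have h1 : ∑ i ∈ rt.index, gS μc (Coalgebra.comul (rt.left i)) *
          gId μb (Coalgebra.comul (rt.right i)) = W (Coalgebra.comul t) := by
        rw [← rt.eq, map_sum]
        exact Finset.sum_congr rfl fun i _ => by rw [hW]; simp
      have h2 : ∑ i ∈ rt.index, gId μb (Coalgebra.comul (rt.left i)) *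
          gS μc (Coalgebra.comul (rt.right i)) = W' (Coalgebra.comul t) := by
        rw [← rt.eq, map_sum]
        exact Finset.sum_congr rfl fun i _ => by rw [hW']; simp
      have hWW : W' = W ∘ₗ (TensorProduct.comm K B B).toLinearMap := by
        apply TensorProduct.ext'
        intro u v
        rw [hW, hW']
        simp only [LinearMap.comp_apply, LinearEquiv.coe_coe, TensorProduct.comm_tmul,
          map_tmul, LinearMap.mul'_apply]
        exact mul_comm _ _
      rw [h1, h2, hWW]
      simp only [LinearMap.comp_apply, LinearEquiv.coe_coe]
      rw [hcos]
    rw [chainL, chainR]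
    exact final
  exact ⟨claim1, claim2, claim3, claim4, claim5, claim6⟩
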